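/- Isometry of the SAFT Zak transform: for every f ∈ L¹(ℝ) ∩ L²(ℝ), ∫_0^1 ∫_0^Δ |Z_A f(t, ω)|² dω dt = ∫_ℝ |f(t)|² dt, i.e. ‖Z_A f‖²_{L²([0,1]×[0,Δ])} = ‖f‖²_{L²(ℝ)}. -/

import Mathlib

open MeasureTheory Real

/-- The SAFT Zak transform of `f : ℝ → ℂ`, with `Ω = 2*(b*q - d*p)`. -/
noncomputable def saftZak (a b d p q : ℝ) (f : ℝ → ℂ) (t ω : ℝ) : ℂ :=
  (Real.sqrt (2 * π * b) : ℂ)⁻¹ *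
    ∑' k : ℤ, f (t + (k : ℝ)) * Complex.exp (Complex.I / (2 * b) *
      ((d * ω ^ 2 + a * (k : ℝ) ^ 2 - 2 * (k : ℝ) * ω + 2 * (b * q - d * p) * ω
        + 2 * p * (k : ℝ) : ℝ) : ℂ))

/-- If a countable family of integrable functions has summable integrals of norms, then the
family of norms is a.e. summable. -/
lemma ae_summable_norm_of_summable_integral_norm {α : Type*} [MeasurableSpace α]
    {μ : Measure α} {F : ℤ → α → ℂ} (hF_int : ∀ k, Integrable (F k) μ)
    (hF_sum : Summable fun k => ∫ x, ‖F k x‖ ∂μ) :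
    ∀ᵐ x ∂μ, Summable fun k => ‖F k x‖ := by
  have hf'' : ∀ i, AEMeasurable (fun x => (‖F i x‖₊ : ENNReal)) μ := fun i =>
    (hF_int i).aestronglyMeasurable.enorm
  have h0 : ∀ i, ∫⁻ x, (‖F i x‖₊ : ENNReal) ∂μ = ‖(∫ x, ‖F i x‖ ∂μ)‖₊ := by
    intro i
    have hif : Integrable (fun x => ((‖F i x‖₊ : ℝ))) μ := by
      simpa only [coe_nnnorm] using (hF_int i).norm
    rw [lintegral_coe_eq_integral (fun x => ‖F i x‖₊) hif]
    simp only [coe_nnnorm]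
    exact (Real.enorm_eq_ofReal (integral_nonneg fun x => norm_nonneg (F i x))).symm
  have hf' : ∑' i, ∫⁻ x, (‖F i x‖₊ : ENNReal) ∂μ ≠ ⊤ := by
    rw [funext h0, ← ENNReal.coe_tsum]
    · exact ENNReal.coe_ne_top
    · simp_rw [← NNReal.summable_coe, coe_nnnorm]
      exact hF_sum.abs
  rw [← lintegral_tsum hf''] at hf'
  refine (ae_lt_top' (AEMeasurable.ennreal_tsum hf'') hf').mono fun x hx => ?_
  have := ENNReal.tsum_coe_ne_top_iff_summable_coe.mp hx.ne
  simpa only [coe_nnnorm] using this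

set_option maxHeartbeats 1000000 in
/-- The inner Parseval identity for the SAFT Zak transform. -/
lemma saftZak_inner (a b d p q : ℝ) (hb : 0 < b) (f : ℝ → ℂ) (t : ℝ)
    (hs : Summable fun k : ℤ => ‖f (t + (k : ℝ))‖) :
    ∫ ω in (0:ℝ)..(2 * π * b), ‖saftZak a b d p q f t ω‖ ^ 2
      = ∑' k : ℤ, ‖f (t + (k : ℝ))‖ ^ 2 := by
  set Δ : ℝ := 2 * π * b with hΔdef
  have hΔ : 0 < Δ := by positivity
  have hbne : (b : ℂ) ≠ 0 := by exact_mod_cast hb.ne'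
  set c : ℤ → ℂ := fun k =>
    f (t + (k : ℝ)) * Complex.exp ((((a * (k:ℝ) ^ 2 + 2 * p * (k:ℝ)) / (2 * b) : ℝ) : ℂ)
      * Complex.I) with hc
  set E : ℤ → ℝ → ℂ := fun k ω =>
    c k * Complex.exp ((((-((k:ℝ) * ω)) / b : ℝ) : ℂ) * Complex.I) with hE
  have hnormc : ∀ k, ‖c k‖ = ‖f (t + (k : ℝ))‖ := by
    intro k
    simp only [hc, norm_mul, Complex.norm_exp_ofReal_mul_I, mul_one]
  have hnormE : ∀ k ω, ‖E k ω‖ = ‖f (t + (k : ℝ))‖ := by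
    intro k ω
    simp only [hE, norm_mul, Complex.norm_exp_ofReal_mul_I, mul_one]
    exact hnormc k
  set S : ℝ → ℂ := fun ω => ∑' k : ℤ, E k ω with hS
  -- Step 1: factor the Zak transform
  have step1 : ∀ ω, saftZak a b d p q f t ω
      = (Real.sqrt Δ : ℂ)⁻¹ *
        (Complex.exp ((((d * ω ^ 2 + 2 * (b * q - d * p) * ω) / (2 * b) : ℝ) : ℂ) * Complex.I)
          * S ω) := by
    intro ω
    unfold saftZak
    rw [hΔdef]
    congr 1
    simp only [hS]
    rw [← tsum_mul_left]
    refine tsum_congr fun k => ?_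
    have hexp : Complex.I / (2 * b) *
        ((d * ω ^ 2 + a * (k : ℝ) ^ 2 - 2 * (k : ℝ) * ω + 2 * (b * q - d * p) * ω
          + 2 * p * (k : ℝ) : ℝ) : ℂ)
        = (((d * ω ^ 2 + 2 * (b * q - d * p) * ω) / (2 * b) : ℝ) : ℂ) * Complex.I
          + ((((a * (k:ℝ) ^ 2 + 2 * p * (k:ℝ)) / (2 * b) : ℝ) : ℂ) * Complex.I
            + (((-((k:ℝ) * ω)) / b : ℝ) : ℂ) * Complex.I) := by
      push_cast
      field_simp
      ring
    rw [hexp, Complex.exp_add, Complex.exp_add]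
    simp only [hE, hc]
    ring
  -- Step 2: pointwise norm
  have step2 : ∀ ω, ‖saftZak a b d p q f t ω‖ ^ 2 = Δ⁻¹ * ‖S ω‖ ^ 2 := by
    intro ω
    rw [step1 ω, norm_mul, norm_mul, norm_inv]
    rw [Complex.norm_real, Real.norm_of_nonneg (Real.sqrt_nonneg Δ),
      Complex.norm_exp_ofReal_mul_I, one_mul, mul_pow, inv_pow, Real.sq_sqrt hΔ.le]
  -- summability facts
  have hsE : ∀ ω, Summable fun k : ℤ => ‖E k ω‖ := by
    intro ω
    refine hs.congr fun k => ?_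
    rw [hnormE]
  have hsEstar : ∀ ω, Summable fun k : ℤ => ‖(starRingEnd ℂ) (E k ω)‖ := by
    intro ω
    refine hs.congr fun k => ?_
    rw [RCLike.norm_conj, hnormE]
  -- Step 3: pointwise expansion of ‖S ω‖²
  have key : ∀ ω, ((‖S ω‖ ^ 2 : ℝ) : ℂ)
      = ∑' z : ℤ × ℤ, E z.1 ω * (starRingEnd ℂ) (E z.2 ω) := by
    intro ω
    have h1 : ((‖S ω‖ ^ 2 : ℝ) : ℂ) = S ω * (starRingEnd ℂ) (S ω) := by
      rw [Complex.mul_conj, Complex.normSq_eq_norm_sq]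
    have h2 : (starRingEnd ℂ) (S ω) = ∑' k : ℤ, (starRingEnd ℂ) (E k ω) := by
      simp only [hS, starRingEnd_apply]
      exact tsum_star
    rw [h1, h2]
    simp only [hS]
    exact tsum_mul_tsum_of_summable_norm (hsE ω) (hsEstar ω)
  -- integrability of each term on the interval
  have hcont : ∀ k : ℤ, Continuous fun ω : ℝ => E k ω := by
    intro k
    simp only [hE]
    exact continuous_const.mul (Complex.continuous_exp.comp
      ((Complex.continuous_ofReal.comp
        (((continuous_const.mul continuous_id).neg).div_const b)).mul continuous_const))
  have hint : ∀ z : ℤ × ℤ, IntegrableOn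
      (fun ω => E z.1 ω * (starRingEnd ℂ) (E z.2 ω)) (Set.Ioc (0:ℝ) Δ) volume := by
    intro z
    exact ((hcont z.1).mul ((hcont z.2).star)).integrableOn_Ioc
  -- summability of integrals of norms
  have hsumnorm : Summable fun z : ℤ × ℤ =>
      ∫ ω in Set.Ioc (0:ℝ) Δ, ‖E z.1 ω * (starRingEnd ℂ) (E z.2 ω)‖ := by
    have h1 : Summable fun z : ℤ × ℤ => ‖f (t + (z.1 : ℝ))‖ * ‖f (t + (z.2 : ℝ))‖ :=
      hs.mul_of_nonneg hs (fun k => norm_nonneg _) fun k => norm_nonneg _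
    refine ((h1.mul_left Δ).congr fun z => ?_)
    have heq : ∀ ω : ℝ, ‖E z.1 ω * (starRingEnd ℂ) (E z.2 ω)‖
        = ‖f (t + (z.1 : ℝ))‖ * ‖f (t + (z.2 : ℝ))‖ := by
      intro ω
      rw [norm_mul, RCLike.norm_conj, hnormE, hnormE]
    simp_rw [heq]
    rw [setIntegral_const, Real.volume_real_Ioc_of_le hΔ.le, sub_zero, smul_eq_mul]
  -- the big exchange
  have big : ((∫ ω in (0:ℝ)..Δ, ‖S ω‖ ^ 2 : ℝ) : ℂ)
      = ∑' z : ℤ × ℤ, ∫ ω in Set.Ioc (0:ℝ) Δ, E z.1 ω * (starRingEnd ℂ) (E z.2 ω) := by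
    rw [← intervalIntegral.integral_ofReal, intervalIntegral.integral_of_le hΔ.le]
    simp_rw [key]
    exact (integral_tsum_of_summable_integral_norm hint hsumnorm).symm
  -- compute each term
  have hterm : ∀ z : ℤ × ℤ, (∫ ω in Set.Ioc (0:ℝ) Δ, E z.1 ω * (starRingEnd ℂ) (E z.2 ω))
      = if z.1 = z.2 then (Δ : ℂ) * ((‖f (t + (z.2 : ℝ))‖ ^ 2 : ℝ) : ℂ) else 0 := by
    rintro ⟨j, k⟩
    have hpt : ∀ ω : ℝ, E j ω * (starRingEnd ℂ) (E k ω)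
        = (c j * (starRingEnd ℂ) (c k)) *
          Complex.exp ((((k : ℂ) - (j : ℂ)) / b * Complex.I) * ω) := by
      intro ω
      simp only [hE, map_mul, ← Complex.exp_conj, map_div₀, Complex.conj_I, Complex.conj_ofReal]
      rw [mul_mul_mul_comm, ← Complex.exp_add]
      congr 1
      congr 1
      push_cast
      field_simp
      ring
    simp only [hpt]
    rw [integral_const_mul]
    by_cases hjk : j = k
    · subst hjk
      simp only [if_pos rfl]
      have h0 : ((j : ℂ) - (j : ℂ)) / (b : ℂ) * Complex.I = 0 := by ring
      simp only [h0, zero_mul, Complex.exp_zero]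
      simp only [setIntegral_const, Real.volume_real_Ioc_of_le hΔ.le, sub_zero,
        Complex.real_smul, mul_one]
      rw [Complex.mul_conj, Complex.normSq_eq_norm_sq, hnormc]
      push_cast
      ring
    · rw [if_neg hjk]
      have hcoef : ((k : ℂ) - (j : ℂ)) / b * Complex.I ≠ 0 := by
        apply mul_ne_zero
        · apply div_ne_zero _ hbne
          intro h
          apply hjk
          have : (j : ℂ) = (k : ℂ) := by linear_combination -h
          exact_mod_cast this
        · exact Complex.I_ne_zero
      rw [← intervalIntegral.integral_of_le hΔ.le, integral_exp_mul_complex hcoef]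
      have hend : ((k : ℂ) - (j : ℂ)) / b * Complex.I * (Δ : ℂ)
          = ((k - j : ℤ) : ℂ) * (2 * π * Complex.I) := by
        rw [hΔdef]
        push_cast
        field_simp
      rw [hend, Complex.exp_int_mul_two_pi_mul_I]
      simp
  -- diagonal sum
  have hdiag : (∑' z : ℤ × ℤ,
      if z.1 = z.2 then (Δ : ℂ) * ((‖f (t + (z.2 : ℝ))‖ ^ 2 : ℝ) : ℂ) else 0)
      = (Δ : ℂ) * ((∑' k : ℤ, ‖f (t + (k : ℝ))‖ ^ 2 : ℝ) : ℂ) := by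
    have hinj : Function.Injective (fun k : ℤ => ((k, k) : ℤ × ℤ)) := by
      intro x y h
      simpa using congrArg Prod.fst h
    rw [Complex.ofReal_tsum, ← tsum_mul_left]
    refine (Function.Injective.tsum_eq hinj ?_).symm.trans ?_
    · intro z hz
      simp only [Function.mem_support] at hz
      have hz1 : z.1 = z.2 := by
        by_contra h
        rw [if_neg h] at hz
        exact hz rfl
      exact ⟨z.1, Prod.ext rfl hz1⟩
    · exact tsum_congr fun k => by simp
  have hSint : (∫ ω in (0:ℝ)..Δ, ‖S ω‖ ^ 2 : ℝ)
      = Δ * ∑' k : ℤ, ‖f (t + (k : ℝ))‖ ^ 2 := by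
    have hfin : ((∫ ω in (0:ℝ)..Δ, ‖S ω‖ ^ 2 : ℝ) : ℂ)
        = ((Δ * ∑' k : ℤ, ‖f (t + (k : ℝ))‖ ^ 2 : ℝ) : ℂ) := by
      rw [big, tsum_congr hterm, hdiag]
      push_cast
      ring
    exact_mod_cast hfin
  calc ∫ ω in (0:ℝ)..Δ, ‖saftZak a b d p q f t ω‖ ^ 2
      = ∫ ω in (0:ℝ)..Δ, Δ⁻¹ * ‖S ω‖ ^ 2 := by simp_rw [step2]
    _ = Δ⁻¹ * ∫ ω in (0:ℝ)..Δ, ‖S ω‖ ^ 2 := intervalIntegral.integral_const_mul _ _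
    _ = Δ⁻¹ * (Δ * ∑' k : ℤ, ‖f (t + (k : ℝ))‖ ^ 2) := by rw [hSint]
    _ = ∑' k : ℤ, ‖f (t + (k : ℝ))‖ ^ 2 := by
        field_simp

/-- Isometry of the SAFT Zak transform from `L²(ℝ)` to `L²([0,1] × [0,Δ])`, `Δ = 2πb`. -/
theorem saftZak_isometry (a b c d p q : ℝ) (hb : 0 < b) (habcd : a * d - b * c = 1)
    (f : ℝ → ℂ) (hf1 : Integrable f) (hf2 : MemLp f 2 volume) :
    (∫ t in (0:ℝ)..1, ∫ ω in (0:ℝ)..(2 * π * b), ‖saftZak a b d p q f t ω‖ ^ 2) =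
      ∫ t : ℝ, ‖f t‖ ^ 2 := by
  set g : ℝ → ℝ := fun x => ‖f x‖ ^ 2 with hgdef
  have hg0 : ∀ x, 0 ≤ g x := fun x => by rw [hgdef]; positivity
  have hg : Integrable g := by
    have h := hf2.integrable_norm_rpow two_ne_zero ENNReal.ofNat_ne_top
    have heq : (fun x => ‖f x‖ ^ (2 : ENNReal).toReal) = g := by
      funext x
      rw [hgdef]
      norm_num [Real.rpow_natCast]
    rwa [heq] at h
  have hsum_ae : ∀ᵐ t ∂(volume.restrict (Set.Ioc (0:ℝ) 1)),
      Summable fun k : ℤ => ‖f (t + (k : ℝ))‖ := by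
    apply ae_summable_norm_of_summable_integral_norm
      (F := fun (k : ℤ) (t : ℝ) => f (t + (k : ℝ)))
    · intro k
      exact (hf1.comp_add_right (k : ℝ)).integrableOn
    · have h := (hf1.norm.hasSum_intervalIntegral_comp_add_int).summable
      refine h.congr fun k => ?_
      rw [intervalIntegral.integral_of_le zero_le_one]
  have hinner : ∀ᵐ t ∂(volume.restrict (Set.Ioc (0:ℝ) 1)),
      (∫ ω in (0:ℝ)..(2 * π * b), ‖saftZak a b d p q f t ω‖ ^ 2)
        = ∑' k : ℤ, g (t + (k : ℝ)) :=
    hsum_ae.mono fun t ht => saftZak_inner a b d p q hb f t ht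
  rw [intervalIntegral.integral_of_le zero_le_one, integral_congr_ae hinner]
  have hGint : ∀ k : ℤ, IntegrableOn (fun t => g (t + (k : ℝ))) (Set.Ioc (0:ℝ) 1) volume :=
    fun k => (hg.comp_add_right (k : ℝ)).integrableOn
  have hGsum0 : HasSum (fun k : ℤ => ∫ t in Set.Ioc (0:ℝ) 1, g (t + (k : ℝ))) (∫ x, g x) := by
    have h := hg.hasSum_intervalIntegral_comp_add_int
    rwa [show (fun n : ℤ => ∫ x in (0:ℝ)..1, g (x + (n : ℝ)))
        = fun n : ℤ => ∫ t in Set.Ioc (0:ℝ) 1, g (t + (n : ℝ)) from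
      funext fun n => intervalIntegral.integral_of_le zero_le_one] at h
  have hGsum' : Summable fun k : ℤ => ∫ t in Set.Ioc (0:ℝ) 1, ‖g (t + (k : ℝ))‖ := by
    refine hGsum0.summable.congr fun k => ?_
    refine integral_congr_ae (ae_of_all _ fun t => ?_)
    exact (Real.norm_of_nonneg (hg0 _)).symm
  rw [← integral_tsum_of_summable_integral_norm hGint hGsum']
  exact hGsum0.tsum_eq
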